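/- arXiv:1610.01061 — 5 statements merged into one kernel-verified Lean document; each statement's English description precedes it below -/
import Mathlib

section
/- Let p be a prime, χ a nontrivial multiplicative character of F_p, U, V ⊆ F_p finite sets, and complex weights φ_u (u ∈ U), ψ_v (v ∈ V). Then |∑_{u∈U} ∑_{v∈V} φ_u ψ_v χ(u+v)| ≤ sqrt( p · (∑_{u∈U}|φ_u|²) · (∑_{v∈V}|ψ_v|²) ). -/
open Finset

lemma key_sum {p : ℕ} [Fact p.Prime] (χ : MulChar (ZMod p) ℂ) (hχ : χ ≠ 1) (v v' : ZMod p) :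
    ∑ u : ZMod p, χ (u + v) * χ⁻¹ (u + v') =
      if v = v' then (p : ℂ) - 1 else -1 := by
  have hp1 : 1 ≤ p := (Fact.out : p.Prime).one_le
  have hre : ∑ u : ZMod p, χ (u + v) * χ⁻¹ (u + v')
      = ∑ u : ZMod p, χ (u + (v - v')) * χ⁻¹ u := by
    rw [← (Equiv.subRight v').sum_comp (fun u => χ (u + v) * χ⁻¹ (u + v'))]
    apply Finset.sum_congr rfl
    intro u _
    simp only [Equiv.subRight_apply]
    rw [show u - v' + v = u + (v - v') from by ring, show u - v' + v' = u from by ring]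
  rw [hre]
  by_cases h : v = v'
  · rw [if_pos h, h, sub_self]
    have hterm : ∀ u : ZMod p, χ (u + 0) * χ⁻¹ u = if u = 0 then 0 else 1 := by
      intro u
      rcases eq_or_ne u 0 with rfl | hu
      · simp [MulChar.map_nonunit χ⁻¹ not_isUnit_zero]
      · rw [if_neg hu, add_zero, MulChar.inv_apply' χ u, ← map_mul,
          mul_inv_cancel₀ hu, map_one]
    rw [Finset.sum_congr rfl fun u _ => hterm u]
    rw [← Finset.add_sum_erase _ _ (Finset.mem_univ (0 : ZMod p)), if_pos rfl, zero_add,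
      Finset.sum_congr rfl (fun u hu => if_neg (Finset.ne_of_mem_erase hu)),
      Finset.sum_const, nsmul_eq_mul, mul_one, Finset.card_erase_of_mem (Finset.mem_univ _),
      Finset.card_univ, ZMod.card, Nat.cast_sub hp1, Nat.cast_one]
  · rw [if_neg h]
    set c := v - v' with hc
    have hc0 : c ≠ 0 := sub_ne_zero.mpr h
    rw [← Finset.add_sum_erase _ _ (Finset.mem_univ (0 : ZMod p))]
    rw [MulChar.map_nonunit χ⁻¹ not_isUnit_zero, mul_zero, zero_add]
    have : ∑ u ∈ Finset.univ.erase (0 : ZMod p), χ (u + c) * χ⁻¹ u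
        = ∑ t ∈ Finset.univ.erase (1 : ZMod p), χ t := by
      apply Finset.sum_nbij' (i := fun u => 1 + c * u⁻¹) (j := fun t => c * (t - 1)⁻¹)
      · intro u hu
        simp only [Finset.mem_erase, Finset.mem_univ, and_true] at hu ⊢
        intro hcon
        apply hc0
        have : c * u⁻¹ = 0 := by linear_combination hcon
        rcases mul_eq_zero.mp this with h1 | h1
        · exact h1
        · exact absurd (inv_eq_zero.mp h1) hu
      · intro t ht
        simp only [Finset.mem_erase, Finset.mem_univ, and_true] at ht ⊢
        exact mul_ne_zero hc0 (inv_ne_zero (sub_ne_zero.mpr ht))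
      · intro u hu
        simp only [Finset.mem_erase, Finset.mem_univ, and_true] at hu
        field_simp
        rw [add_sub_cancel_left, div_self hc0]
      · intro t ht
        simp only [Finset.mem_erase, Finset.mem_univ, and_true] at ht
        have h1 : t - 1 ≠ 0 := sub_ne_zero.mpr ht
        field_simp
        ring
      · intro u hu
        simp only [Finset.mem_erase, Finset.mem_univ, and_true] at hu
        rw [MulChar.inv_apply' χ u, ← map_mul]
        congr 1
        field_simp
    rw [this, Finset.sum_erase_eq_sub (Finset.mem_univ (1 : ZMod p)),
      MulChar.sum_eq_zero_of_ne_one hχ, map_one, zero_sub]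

theorem stmt1 {p : ℕ} [Fact p.Prime] (χ : MulChar (ZMod p) ℂ) (hχ : χ ≠ 1)
    (U V : Finset (ZMod p)) (φ ψ : ZMod p → ℂ) :
    ‖∑ u ∈ U, ∑ v ∈ V, φ u * ψ v * χ (u + v)‖ ≤
      Real.sqrt ((p : ℝ) * (∑ u ∈ U, ‖φ u‖ ^ 2) *
        (∑ v ∈ V, ‖ψ v‖ ^ 2)) := by
  set S : ZMod p → ℂ := fun u => ∑ v ∈ V, ψ v * χ (u + v) with hS
  have hsum : ∑ u ∈ U, ∑ v ∈ V, φ u * ψ v * χ (u + v) = ∑ u ∈ U, φ u * S u := by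
    refine Finset.sum_congr rfl fun u _ => ?_
    rw [hS, Finset.mul_sum]
    exact Finset.sum_congr rfl fun v _ => by ring
  rw [hsum]
  -- key identity for ∑_u |S u|^2 over all of ZMod p
  have h1 : ∀ u, S u * (starRingEnd ℂ) (S u)
      = ∑ v ∈ V, ∑ v' ∈ V, (ψ v * (starRingEnd ℂ) (ψ v')) * (χ (u + v) * χ⁻¹ (u + v')) := by
    intro u
    rw [hS, map_sum, Finset.sum_mul_sum]
    refine Finset.sum_congr rfl fun v _ => Finset.sum_congr rfl fun v' _ => ?_
    rw [map_mul]
    have : (starRingEnd ℂ) (χ (u + v')) = χ⁻¹ (u + v') := by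
      rw [← MulChar.star_apply' χ (u + v'), starRingEnd_apply]
    rw [this]
    ring
  have hC : ∑ u : ZMod p, S u * (starRingEnd ℂ) (S u)
      = (p : ℂ) * (∑ v ∈ V, ψ v * (starRingEnd ℂ) (ψ v))
        - (∑ v ∈ V, ψ v) * (starRingEnd ℂ) (∑ v ∈ V, ψ v) := by
    calc ∑ u : ZMod p, S u * (starRingEnd ℂ) (S u)
        = ∑ v ∈ V, ∑ v' ∈ V, (ψ v * (starRingEnd ℂ) (ψ v'))
            * ∑ u : ZMod p, χ (u + v) * χ⁻¹ (u + v') := by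
          simp_rw [h1, Finset.mul_sum]
          rw [Finset.sum_comm]
          exact Finset.sum_congr rfl fun v _ => Finset.sum_comm
      _ = ∑ v ∈ V, ∑ v' ∈ V, (ψ v * (starRingEnd ℂ) (ψ v'))
            * (if v = v' then (p : ℂ) - 1 else -1) := by
          exact Finset.sum_congr rfl fun v _ => Finset.sum_congr rfl fun v' _ => by
            rw [key_sum χ hχ v v']
      _ = ∑ v ∈ V, ((∑ v' ∈ V, if v = v' then (p : ℂ) * (ψ v * (starRingEnd ℂ) (ψ v')) else 0)
            - ∑ v' ∈ V, ψ v * (starRingEnd ℂ) (ψ v')) := by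
          refine Finset.sum_congr rfl fun v _ => ?_
          rw [← Finset.sum_sub_distrib]
          refine Finset.sum_congr rfl fun v' _ => ?_
          split <;> ring
      _ = (p : ℂ) * (∑ v ∈ V, ψ v * (starRingEnd ℂ) (ψ v))
            - (∑ v ∈ V, ψ v) * (starRingEnd ℂ) (∑ v ∈ V, ψ v) := by
          rw [Finset.sum_sub_distrib]
          congr 1
          · rw [Finset.mul_sum]
            refine Finset.sum_congr rfl fun v hv => ?_
            rw [Finset.sum_ite_eq V v (fun v' => (p : ℂ) * (ψ v * (starRingEnd ℂ) (ψ v'))),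
              if_pos hv]
          · rw [map_sum, Finset.sum_mul_sum]
  have hCast : ∀ z : ℂ, z * (starRingEnd ℂ) z = ((‖z‖ ^ 2 : ℝ) : ℂ) := by
    intro z
    rw [Complex.mul_conj, Complex.sq_norm]
  have hR : (∑ u : ZMod p, ‖S u‖ ^ 2)
      = (p : ℝ) * (∑ v ∈ V, ‖ψ v‖ ^ 2)
        - ‖∑ v ∈ V, ψ v‖ ^ 2 := by
    have := hC
    simp_rw [hCast] at this
    exact_mod_cast this
  have hB : ∑ u ∈ U, ‖S u‖ ^ 2 ≤ (p : ℝ) * ∑ v ∈ V, ‖ψ v‖ ^ 2 := by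
    calc ∑ u ∈ U, ‖S u‖ ^ 2 ≤ ∑ u : ZMod p, ‖S u‖ ^ 2 :=
          Finset.sum_le_sum_of_subset_of_nonneg (Finset.subset_univ U)
            (fun u _ _ => sq_nonneg _)
      _ ≤ (p : ℝ) * ∑ v ∈ V, ‖ψ v‖ ^ 2 := by
          rw [hR]; exact sub_le_self _ (sq_nonneg _)
  have hCS : ‖∑ u ∈ U, φ u * S u‖
      ≤ ∑ u ∈ U, ‖φ u‖ * ‖S u‖ := by
    refine le_trans (norm_sum_le _ _) (le_of_eq ?_)
    exact Finset.sum_congr rfl fun u _ => norm_mul _ _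
  refine hCS.trans (Real.le_sqrt_of_sq_le ?_)
  calc (∑ u ∈ U, ‖φ u‖ * ‖S u‖) ^ 2
      ≤ (∑ u ∈ U, ‖φ u‖ ^ 2) * ∑ u ∈ U, ‖S u‖ ^ 2 :=
        Finset.sum_mul_sq_le_sq_mul_sq U _ _
    _ ≤ (∑ u ∈ U, ‖φ u‖ ^ 2) * ((p : ℝ) * ∑ v ∈ V, ‖ψ v‖ ^ 2) := by
        refine mul_le_mul_of_nonneg_left hB (Finset.sum_nonneg fun u _ => sq_nonneg _)
    _ = (p : ℝ) * (∑ u ∈ U, ‖φ u‖ ^ 2) * (∑ v ∈ V, ‖ψ v‖ ^ 2) := by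
        ring
end

section
/- Let p be prime, χ a nontrivial multiplicative character of F_p, A, B, C, D ⊆ F_p^* with weights |α_a| ≤ 1, |β_{b,c,d}| ≤ 1, and S = ∑_{a∈A}∑_{b∈B}∑_{c∈C}∑_{d∈D} α_a β_{b,c,d} χ(a+b+cd). Then |S|² ≤ I(B,C,D) · ∑_{λ∈F_p} |∑_{a∈A} α_a χ(a+λ)|², where I(B,C,D) is the number of solutions of b₁+c₁d₁ = b₂+c₂d₂ with bᵢ ∈ B, cᵢ ∈ C, dᵢ ∈ D. -/
open Finset

theorem stmt6 {p : ℕ} [Fact p.Prime] (χ : MulChar (ZMod p) ℂ) (hχ : χ ≠ 1)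
    (A B C D : Finset (ZMod p)) (hA : (0 : ZMod p) ∉ A) (hB : (0 : ZMod p) ∉ B)
    (hC : (0 : ZMod p) ∉ C) (hD : (0 : ZMod p) ∉ D)
    (α : ZMod p → ℂ) (β : ZMod p → ZMod p → ZMod p → ℂ)
    (hα : ∀ a ∈ A, ‖α a‖ ≤ 1)
    (hβ : ∀ b ∈ B, ∀ c ∈ C, ∀ d ∈ D, ‖β b c d‖ ≤ 1) :
    ‖∑ a ∈ A, ∑ b ∈ B, ∑ c ∈ C, ∑ d ∈ D,
        α a * β b c d * χ (a + b + c * d)‖ ^ 2 ≤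
      ((((B ×ˢ C ×ˢ D) ×ˢ (B ×ˢ C ×ˢ D)).filter
          (fun t => t.1.1 + t.1.2.1 * t.1.2.2 = t.2.1 + t.2.2.1 * t.2.2.2)).card : ℝ) *
        ∑ l : ZMod p, ‖∑ a ∈ A, α a * χ (a + l)‖ ^ 2 := by
  set P : Finset (ZMod p × ZMod p × ZMod p) := B ×ˢ C ×ˢ D with hP
  set v : ZMod p × ZMod p × ZMod p → ZMod p := fun t => t.1 + t.2.1 * t.2.2 with hv
  set f : ZMod p → ℂ := fun l => ∑ a ∈ A, α a * χ (a + l) with hf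
  set g : ZMod p → ℂ := fun l => ∑ t ∈ P.filter (fun t => v t = l), β t.1 t.2.1 t.2.2
    with hg
  set N : ZMod p → ℕ := fun l => (P.filter (fun t => v t = l)).card with hN
  -- Step 1: rewrite S
  have hS : (∑ a ∈ A, ∑ b ∈ B, ∑ c ∈ C, ∑ d ∈ D, α a * β b c d * χ (a + b + c * d))
      = ∑ l : ZMod p, g l * f l := by
    have h1 : (∑ a ∈ A, ∑ b ∈ B, ∑ c ∈ C, ∑ d ∈ D, α a * β b c d * χ (a + b + c * d))
        = ∑ t ∈ P, β t.1 t.2.1 t.2.2 * f (v t) := by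
      rw [hP, Finset.sum_product, Finset.sum_comm]
      refine Finset.sum_congr rfl fun b hb => ?_
      rw [Finset.sum_product, Finset.sum_comm]
      refine Finset.sum_congr rfl fun c hc => ?_
      rw [Finset.sum_comm]
      refine Finset.sum_congr rfl fun d hd => ?_
      rw [hf]
      simp only [Finset.mul_sum]
      refine Finset.sum_congr rfl fun a ha => ?_
      rw [← add_assoc]
      ring
    have h2 : ∀ l : ZMod p, g l * f l
        = ∑ t ∈ P.filter (fun t => v t = l), β t.1 t.2.1 t.2.2 * f (v t) := by
      intro l
      rw [hg, Finset.sum_mul]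
      refine Finset.sum_congr rfl fun t ht => ?_
      rw [(Finset.mem_filter.mp ht).2]
    rw [h1]
    rw [show (∑ l : ZMod p, g l * f l)
        = ∑ l : ZMod p, ∑ t ∈ P.filter (fun t => v t = l),
            β t.1 t.2.1 t.2.2 * f (v t) from Finset.sum_congr rfl fun l _ => h2 l]
    exact (Finset.sum_fiberwise P v (fun t => β t.1 t.2.1 t.2.2 * f (v t))).symm
  -- Step 2: |g l| ≤ N l
  have hgN : ∀ l : ZMod p, ‖g l‖ ≤ (N l : ℝ) := by
    intro l
    calc ‖g l‖ ≤ ∑ t ∈ P.filter (fun t => v t = l),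
          ‖β t.1 t.2.1 t.2.2‖ := norm_sum_le _ _
      _ ≤ ∑ t ∈ P.filter (fun t => v t = l), 1 := by
          refine Finset.sum_le_sum fun t ht => ?_
          have htP := (Finset.mem_filter.mp ht).1
          rw [hP] at htP
          obtain ⟨h1, h2⟩ := Finset.mem_product.mp htP
          obtain ⟨h3, h4⟩ := Finset.mem_product.mp h2
          exact hβ _ h1 _ h3 _ h4
      _ = (N l : ℝ) := by simp [hN]
  -- Step 3: sum of N^2 equals the card
  have hcard : (((P ×ˢ P).filter
        (fun t => t.1.1 + t.1.2.1 * t.1.2.2 = t.2.1 + t.2.2.1 * t.2.2.2)).card : ℝ)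
      = ∑ l : ZMod p, ((N l : ℝ))^2 := by
    have key : ((P ×ˢ P).filter (fun t => v t.1 = v t.2)).card
        = ∑ l : ZMod p, (N l)^2 := by
      rw [Finset.card_eq_sum_card_fiberwise
        (f := fun t => v t.1) (t := Finset.univ) (fun x _ => Finset.mem_univ _)]
      refine Finset.sum_congr rfl fun l _ => ?_
      have : ((P ×ˢ P).filter (fun t => v t.1 = v t.2)).filter (fun t => v t.1 = l)
          = (P.filter (fun t => v t = l)) ×ˢ (P.filter (fun t => v t = l)) := by
        ext t
        simp only [Finset.mem_filter, Finset.mem_product]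
        constructor
        · rintro ⟨⟨⟨hp1, hp2⟩, heq⟩, hl⟩
          exact ⟨⟨hp1, hl⟩, hp2, heq ▸ hl⟩
        · rintro ⟨⟨hp1, hl1⟩, hp2, hl2⟩
          exact ⟨⟨⟨hp1, hp2⟩, hl1.trans hl2.symm⟩, hl1⟩
      rw [this, Finset.card_product, hN, sq]
    have : ((P ×ˢ P).filter
        (fun t => t.1.1 + t.1.2.1 * t.1.2.2 = t.2.1 + t.2.2.1 * t.2.2.2))
        = ((P ×ˢ P).filter (fun t => v t.1 = v t.2)) := rfl
    rw [this, key]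
    push_cast
    rfl
  -- Step 4: Cauchy-Schwarz
  rw [hS]
  calc ‖∑ l : ZMod p, g l * f l‖ ^ 2
      ≤ (∑ l : ZMod p, ‖g l‖ * ‖f l‖) ^ 2 := by
        refine pow_le_pow_left₀ (norm_nonneg _) ?_ 2
        refine (norm_sum_le _ _).trans ?_
        refine le_of_eq (Finset.sum_congr rfl fun l _ => ?_)
        exact norm_mul _ _
    _ ≤ (∑ l : ZMod p, ‖g l‖ ^ 2) * (∑ l : ZMod p, ‖f l‖ ^ 2) :=
        Finset.sum_mul_sq_le_sq_mul_sq Finset.univ _ _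
    _ ≤ (∑ l : ZMod p, ((N l : ℝ))^2) * (∑ l : ZMod p, ‖f l‖ ^ 2) := by
        refine mul_le_mul_of_nonneg_right ?_ ?_
        · refine Finset.sum_le_sum fun l _ => ?_
          exact pow_le_pow_left₀ (norm_nonneg _) (hgN l) 2
        · exact Finset.sum_nonneg fun l _ => sq_nonneg _
    _ = _ := by rw [hcard]
end

section
/- Let p be prime, χ a nontrivial multiplicative character of F_p, and A, B, C, D ⊆ F_p^* of cardinalities A, B, C, D with weights bounded by 1. Then |∑_{a,b,c,d} α_a β_{b,c,d} χ(a+b+cd)| ≤ sqrt( I(B,C,D) · A · p ), where I(B,C,D) is the number of solutions to b₁+c₁d₁ = b₂+c₂d₂ in (B×C×D)². -/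
open Finset

section Aux
open Complex


variable {p : ℕ} [Fact p.Prime]

lemma aux_mul_conj (χ : MulChar (ZMod p) ℂ) (u : ZMod p) (hu : u ≠ 0) :
    χ u * (starRingEnd ℂ) (χ u) = 1 := by
  rw [Complex.mul_conj]
  have h1 : (χ u) ^ (p - 1) = 1 := by
    rw [← map_pow, ZMod.pow_card_sub_one_eq_one hu, map_one]
  have hp : p - 1 ≠ 0 := by
    have := (Fact.out : p.Prime).two_le; omega
  have := Complex.norm_eq_one_of_pow_eq_one h1 hp
  rw [Complex.normSq_eq_norm_sq, this]
  norm_num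

lemma aux_shift (χ : MulChar (ZMod p) ℂ) (hχ : χ ≠ 1) (t : ZMod p) (ht : t ≠ 0) :
    ∑ x : ZMod p, χ (x + t) * (starRingEnd ℂ) (χ x) = -1 := by
  have h0 : χ (0 + t) * (starRingEnd ℂ) (χ 0) = 0 := by
    simp [MulChar.map_zero]
  rw [← Finset.sum_erase (f := fun x : ZMod p => χ (x + t) * (starRingEnd ℂ) (χ x)) Finset.univ h0]
  have hterm : ∀ x ∈ Finset.univ.erase (0 : ZMod p),
      χ (x + t) * (starRingEnd ℂ) (χ x) = χ (1 + t * x⁻¹) := by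
    intro x hx
    have hx0 : x ≠ 0 := Finset.mem_erase.1 hx |>.1
    have : χ (x + t) = χ (1 + t * x⁻¹) * χ x := by
      rw [← map_mul]
      congr 1
      field_simp
    rw [this, mul_assoc, aux_mul_conj χ x hx0, mul_one]
  rw [Finset.sum_congr rfl hterm]
  have hbij : ∑ x ∈ Finset.univ.erase (0 : ZMod p), χ (1 + t * x⁻¹) =
      ∑ u ∈ Finset.univ.erase (1 : ZMod p), χ u := by
    apply Finset.sum_nbij' (i := fun x => 1 + t * x⁻¹) (j := fun u => t * (u - 1)⁻¹)
    · intro x hx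
      have hx0 : x ≠ 0 := Finset.mem_erase.1 hx |>.1
      simp only [Finset.mem_erase, Finset.mem_univ, and_true]
      intro h
      have : t * x⁻¹ = 0 := by linear_combination h
      rcases mul_eq_zero.1 this with h' | h'
      · exact ht h'
      · exact hx0 (inv_eq_zero.1 h')
    · intro u hu
      have hu1 : u ≠ 1 := Finset.mem_erase.1 hu |>.1
      simp only [Finset.mem_erase, Finset.mem_univ, and_true]
      intro h
      rcases mul_eq_zero.1 h with h' | h'
      · exact ht h'
      · exact hu1 (by have := inv_eq_zero.1 h'; linear_combination this)
    · intro x hx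
      have hx0 : x ≠ 0 := Finset.mem_erase.1 hx |>.1
      field_simp
      simp [ht]
    · intro u hu
      have hu1 : u ≠ 1 := Finset.mem_erase.1 hu |>.1
      have h1 : u - 1 ≠ 0 := sub_ne_zero.2 hu1
      field_simp
      ring
    · intro x hx
      rfl
  rw [hbij, Finset.sum_erase_eq_sub (Finset.mem_univ _),
    MulChar.sum_eq_zero_of_ne_one hχ, map_one]
  ring
variable {p : ℕ} [Fact p.Prime]





lemma aux_K (χ : MulChar (ZMod p) ℂ) (hχ : χ ≠ 1) (a a' : ZMod p) :
    ∑ x : ZMod p, χ (x + a) * (starRingEnd ℂ) (χ (x + a')) =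
      if a = a' then ((p : ℂ) - 1) else -1 := by
  have hshift : ∑ x : ZMod p, χ (x + a) * (starRingEnd ℂ) (χ (x + a')) =
      ∑ x : ZMod p, χ (x + (a - a')) * (starRingEnd ℂ) (χ x) := by
    rw [← Equiv.sum_comp (Equiv.addRight a')
      (fun y => χ (y + (a - a')) * (starRingEnd ℂ) (χ y))]
    refine Finset.sum_congr rfl fun x _ => ?_
    have : x + a' + (a - a') = x + a := by ring
    simp only [Equiv.coe_addRight, this]
  rw [hshift]
  by_cases h : a = a'
  · subst h
    simp only [sub_self, if_true, add_zero]
    have hterm : ∀ x : ZMod p, χ x * (starRingEnd ℂ) (χ x) =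
        if x = 0 then 0 else 1 := by
      intro x
      by_cases hx : x = 0
      · simp [hx, MulChar.map_zero]
      · simp [hx, aux_mul_conj χ x hx]
    rw [Finset.sum_congr rfl fun x _ => hterm x]
    have hcard : (∑ x : ZMod p, if x = 0 then (0:ℂ) else 1) =
        ((Finset.univ.erase (0 : ZMod p)).card : ℂ) := by
      rw [Finset.sum_ite, Finset.sum_const, Finset.sum_const]
      have : Finset.filter (fun x : ZMod p => ¬ x = 0) Finset.univ =
          Finset.univ.erase 0 := by
        ext x; simp [Finset.mem_erase]
      simp [this]
    rw [hcard, Finset.card_erase_of_mem (Finset.mem_univ _), Finset.card_univ,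
      ZMod.card]
    have : 1 ≤ p := (Fact.out : p.Prime).one_lt.le
    push_cast [Nat.cast_sub this]
    ring
  · rw [if_neg h]
    exact aux_shift χ hχ (a - a') (sub_ne_zero.2 h)
variable {p : ℕ} [Fact p.Prime]



lemma aux_fsum (χ : MulChar (ZMod p) ℂ) (hχ : χ ≠ 1) (A : Finset (ZMod p))
    (α : ZMod p → ℂ) (hα : ∀ a ∈ A, ‖α a‖ ≤ 1) :
    ∑ x : ZMod p, ‖∑ a ∈ A, α a * χ (a + x)‖ ^ 2 ≤ (A.card : ℝ) * p := by
  set f : ZMod p → ℂ := fun x => ∑ a ∈ A, α a * χ (a + x) with hf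
  have hS2 : ∑ x : ZMod p, f x * (starRingEnd ℂ) (f x) =
      (p : ℂ) * ∑ a ∈ A, α a * (starRingEnd ℂ) (α a) -
        (∑ a ∈ A, α a) * (starRingEnd ℂ) (∑ a ∈ A, α a) := by
    have hexp : ∀ x : ZMod p, f x * (starRingEnd ℂ) (f x) =
        ∑ a ∈ A, ∑ a' ∈ A, (α a * (starRingEnd ℂ) (α a')) *
          (χ (x + a) * (starRingEnd ℂ) (χ (x + a'))) := by
      intro x
      rw [hf]
      simp only [map_sum, Finset.sum_mul, Finset.mul_sum, map_mul]
      rw [Finset.sum_comm]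
      refine Finset.sum_congr rfl fun a _ => Finset.sum_congr rfl fun a' _ => ?_
      rw [add_comm a x, add_comm a' x]
      ring
    rw [Finset.sum_congr rfl fun x _ => hexp x]
    rw [Finset.sum_comm]
    have hswap : ∀ a ∈ A, (∑ x : ZMod p, ∑ a' ∈ A, (α a * (starRingEnd ℂ) (α a')) *
        (χ (x + a) * (starRingEnd ℂ) (χ (x + a')))) =
        ∑ a' ∈ A, (α a * (starRingEnd ℂ) (α a')) * (if a = a' then ((p : ℂ) - 1) else -1) := by
      intro a _
      rw [Finset.sum_comm]
      refine Finset.sum_congr rfl fun a' _ => ?_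
      rw [← Finset.mul_sum, aux_K χ hχ a a']
    rw [Finset.sum_congr rfl hswap]
    have hsplit : ∀ a ∈ A, ∑ a' ∈ A, (α a * (starRingEnd ℂ) (α a')) *
        (if a = a' then ((p : ℂ) - 1) else -1) =
        (p : ℂ) * (α a * (starRingEnd ℂ) (α a)) -
          ∑ a' ∈ A, α a * (starRingEnd ℂ) (α a') := by
      intro a ha
      have : ∀ a' ∈ A, (α a * (starRingEnd ℂ) (α a')) *
          (if a = a' then ((p : ℂ) - 1) else -1) =
          (if a = a' then (α a * (starRingEnd ℂ) (α a')) * p else 0) -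
            α a * (starRingEnd ℂ) (α a') := by
        intro a' _
        by_cases h : a = a' <;> simp [h] <;> ring
      rw [Finset.sum_congr rfl this, Finset.sum_sub_distrib,
        Finset.sum_ite_eq A a (fun a' => (α a * (starRingEnd ℂ) (α a')) * (p : ℂ)),
        if_pos ha]
      ring
    rw [Finset.sum_congr rfl hsplit, Finset.sum_sub_distrib, ← Finset.mul_sum,
      Finset.sum_mul]
    congr 1
    rw [map_sum]
    exact Finset.sum_congr rfl fun a _ => (Finset.mul_sum _ _ _).symm
  have habs : ∀ x : ZMod p, ‖f x‖ ^ 2 = (f x * (starRingEnd ℂ) (f x)).re := by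
    intro x
    rw [Complex.mul_conj, Complex.ofReal_re, Complex.normSq_eq_norm_sq]
  calc ∑ x : ZMod p, ‖f x‖ ^ 2
      = (∑ x : ZMod p, f x * (starRingEnd ℂ) (f x)).re := by
        rw [Complex.re_sum]
        exact Finset.sum_congr rfl fun x _ => habs x
    _ = (p : ℝ) * ∑ a ∈ A, Complex.normSq (α a) - Complex.normSq (∑ a ∈ A, α a) := by
        rw [hS2]
        simp only [Complex.mul_conj]
        push_cast
        simp
    _ ≤ (A.card : ℝ) * p := by
        have h1 : ∑ a ∈ A, Complex.normSq (α a) ≤ (A.card : ℝ) := by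
          calc ∑ a ∈ A, Complex.normSq (α a) ≤ ∑ a ∈ A, (1 : ℝ) := by
                refine Finset.sum_le_sum fun a ha => ?_
                rw [← Complex.sq_norm]
                nlinarith [hα a ha, norm_nonneg (α a)]
            _ = (A.card : ℝ) := by simp
        have h2 : (0 : ℝ) ≤ Complex.normSq (∑ a ∈ A, α a) := Complex.normSq_nonneg _
        have hp0 : (0 : ℝ) ≤ (p : ℝ) := Nat.cast_nonneg _
        nlinarith

lemma aux_count {γ κ : Type*} [DecidableEq κ] [Fintype κ] (T : Finset γ) (E : γ → κ) :
    ∑ x : κ, (T.filter (fun t => E t = x)).card ^ 2 =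
      ((T ×ˢ T).filter (fun q => E q.1 = E q.2)).card := by
  have h1 : ((T ×ˢ T).filter (fun q => E q.1 = E q.2)).card =
      ∑ t ∈ T, (T.filter (fun s => E s = E t)).card := by
    rw [Finset.card_filter, Finset.sum_product]
    refine Finset.sum_congr rfl fun t _ => ?_
    rw [Finset.card_filter]
    exact Finset.sum_congr rfl fun s _ => by simp [eq_comm]
  rw [h1, ← Finset.sum_fiberwise T E (fun t => (T.filter (fun s => E s = E t)).card)]
  refine Finset.sum_congr rfl fun x _ => ?_
  have : ∀ t ∈ T.filter (fun t => E t = x),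
      (T.filter (fun s => E s = E t)).card = (T.filter (fun s => E s = x)).card := by
    intro t ht
    rw [(Finset.mem_filter.1 ht).2]
  rw [Finset.sum_congr rfl this, Finset.sum_const, smul_eq_mul, sq]





theorem stmt7 {p : ℕ} [Fact p.Prime] (χ : MulChar (ZMod p) ℂ) (hχ : χ ≠ 1)
    (A B C D : Finset (ZMod p)) (hA : (0 : ZMod p) ∉ A) (hB : (0 : ZMod p) ∉ B)
    (hC : (0 : ZMod p) ∉ C) (hD : (0 : ZMod p) ∉ D)
    (α : ZMod p → ℂ) (β : ZMod p → ZMod p → ZMod p → ℂ)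
    (hα : ∀ a ∈ A, ‖α a‖ ≤ 1)
    (hβ : ∀ b ∈ B, ∀ c ∈ C, ∀ d ∈ D, ‖β b c d‖ ≤ 1) :
    ‖∑ a ∈ A, ∑ b ∈ B, ∑ c ∈ C, ∑ d ∈ D,
        α a * β b c d * χ (a + b + c * d)‖ ≤
      Real.sqrt (((((B ×ˢ C ×ˢ D) ×ˢ (B ×ˢ C ×ˢ D)).filter
          (fun t => t.1.1 + t.1.2.1 * t.1.2.2 = t.2.1 + t.2.2.1 * t.2.2.2)).card : ℝ) *
        A.card * p) := by
  classical
  set T : Finset (ZMod p × ZMod p × ZMod p) := B ×ˢ C ×ˢ D with hT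
  set E : ZMod p × ZMod p × ZMod p → ZMod p := fun t => t.1 + t.2.1 * t.2.2 with hE
  set f : ZMod p → ℂ := fun x => ∑ a ∈ A, α a * χ (a + x) with hf
  set g : ZMod p → ℂ := fun x => ∑ t ∈ T.filter (fun t => E t = x), β t.1 t.2.1 t.2.2
    with hg
  set N : ZMod p → ℕ := fun x => (T.filter (fun t => E t = x)).card with hN
  -- Step A : rewrite the quadruple sum
  have hA1 : (∑ a ∈ A, ∑ b ∈ B, ∑ c ∈ C, ∑ d ∈ D,
      α a * β b c d * χ (a + b + c * d)) = ∑ x : ZMod p, g x * f x := by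
    calc (∑ a ∈ A, ∑ b ∈ B, ∑ c ∈ C, ∑ d ∈ D, α a * β b c d * χ (a + b + c * d))
        = ∑ a ∈ A, ∑ t ∈ T, α a * β t.1 t.2.1 t.2.2 * χ (a + E t) := by
          refine Finset.sum_congr rfl fun a _ => ?_
          rw [hT, Finset.sum_product]
          refine Finset.sum_congr rfl fun b _ => ?_
          rw [Finset.sum_product]
          refine Finset.sum_congr rfl fun c _ => Finset.sum_congr rfl fun d _ => ?_
          rw [hE]
          ring_nf
      _ = ∑ t ∈ T, ∑ a ∈ A, α a * β t.1 t.2.1 t.2.2 * χ (a + E t) := Finset.sum_comm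
      _ = ∑ t ∈ T, β t.1 t.2.1 t.2.2 * f (E t) := by
          refine Finset.sum_congr rfl fun t _ => ?_
          rw [hf, Finset.mul_sum]
          exact Finset.sum_congr rfl fun a _ => by ring
      _ = ∑ x : ZMod p, ∑ t ∈ T.filter (fun t => E t = x), β t.1 t.2.1 t.2.2 * f (E t) :=
          (Finset.sum_fiberwise T E _).symm
      _ = ∑ x : ZMod p, g x * f x := by
          refine Finset.sum_congr rfl fun x _ => ?_
          rw [hg, Finset.sum_mul]
          refine Finset.sum_congr rfl fun t ht => ?_
          rw [(Finset.mem_filter.1 ht).2]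
  rw [hA1]
  -- Step B : Cauchy-Schwarz
  have hCS : ‖∑ x : ZMod p, g x * f x‖ ≤
      Real.sqrt (∑ x : ZMod p, ‖g x‖ ^ 2) *
        Real.sqrt (∑ x : ZMod p, ‖f x‖ ^ 2) := by
    calc ‖∑ x : ZMod p, g x * f x‖
        ≤ ∑ x : ZMod p, ‖g x * f x‖ := norm_sum_le _ _
      _ = ∑ x : ZMod p, ‖g x‖ * ‖f x‖ := by
          simp [map_mul]
      _ ≤ _ := Real.sum_mul_le_sqrt_mul_sqrt _ _ _
  refine hCS.trans ?_
  -- Step C : bound on g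
  have hgN : ∀ x : ZMod p, ‖g x‖ ≤ (N x : ℝ) := by
    intro x
    refine (norm_sum_le _ _).trans ?_
    rw [hN]
    calc ∑ t ∈ T.filter (fun t => E t = x), ‖β t.1 t.2.1 t.2.2‖
        ≤ ∑ t ∈ T.filter (fun t => E t = x), (1 : ℝ) := by
          refine Finset.sum_le_sum fun t ht => ?_
          have htT : t ∈ T := Finset.mem_filter.1 ht |>.1
          rw [hT, Finset.mem_product] at htT
          obtain ⟨hb, hcd⟩ := htT
          rw [Finset.mem_product] at hcd
          exact hβ _ hb _ hcd.1 _ hcd.2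
      _ = ((T.filter (fun t => E t = x)).card : ℝ) := by simp
  have hgsum : ∑ x : ZMod p, ‖g x‖ ^ 2 ≤
      ((((B ×ˢ C ×ˢ D) ×ˢ (B ×ˢ C ×ˢ D)).filter
        (fun t => t.1.1 + t.1.2.1 * t.1.2.2 = t.2.1 + t.2.2.1 * t.2.2.2)).card : ℝ) := by
    have key : ∑ x : ZMod p, ((N x : ℝ)) ^ 2 =
        ((((B ×ˢ C ×ˢ D) ×ˢ (B ×ˢ C ×ˢ D)).filter
          (fun t => t.1.1 + t.1.2.1 * t.1.2.2 = t.2.1 + t.2.2.1 * t.2.2.2)).card : ℝ) := by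
      have := aux_count T E
      rw [hT, hE] at this
      exact_mod_cast congrArg (Nat.cast : ℕ → ℝ) this
    rw [← key]
    refine Finset.sum_le_sum fun x _ => ?_
    have := hgN x
    nlinarith [norm_nonneg (g x)]
  -- Step D : bound on f
  have hfsum : ∑ x : ZMod p, ‖f x‖ ^ 2 ≤ (A.card : ℝ) * p :=
    aux_fsum χ hχ A α hα
  -- Combine
  have h1 : Real.sqrt (∑ x : ZMod p, ‖g x‖ ^ 2) *
      Real.sqrt (∑ x : ZMod p, ‖f x‖ ^ 2) ≤
      Real.sqrt (((((B ×ˢ C ×ˢ D) ×ˢ (B ×ˢ C ×ˢ D)).filter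
        (fun t => t.1.1 + t.1.2.1 * t.1.2.2 = t.2.1 + t.2.2.1 * t.2.2.2)).card : ℝ)) *
      Real.sqrt ((A.card : ℝ) * p) := by
    have hg0 : (0:ℝ) ≤ ∑ x : ZMod p, ‖g x‖ ^ 2 :=
      Finset.sum_nonneg fun x _ => by positivity
    exact mul_le_mul (Real.sqrt_le_sqrt hgsum) (Real.sqrt_le_sqrt hfsum)
      (Real.sqrt_nonneg _) (Real.sqrt_nonneg _)
  refine h1.trans ?_
  rw [← Real.sqrt_mul (by positivity), mul_assoc]

end Aux
end

section
/- Let p be prime and A, B, C, D ⊆ F_p^* with cardinalities A, B, C, D, and M = max{B, C, D}. If the weights satisfy |α_a| ≤ 1 and |β_{b,c,d}| ≤ 1, and χ is a nontrivial multiplicative character of F_p, then |∑_{a,b,c,d} α_a β_{b,c,d} χ(a+b+cd)| ≤ ABCD · sqrt(p/(A·M)). -/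
open Finset

section Aux

variable {p : ℕ} [Fact p.Prime]

private lemma conj_char' (χ : MulChar (ZMod p) ℂ) (x : ZMod p) :
    (starRingEnd ℂ) (χ x) = χ⁻¹ x := MulChar.star_apply' χ x

private lemma Jzero' (χ : MulChar (ZMod p) ℂ) :
    ∑ v : ZMod p, χ v * (starRingEnd ℂ) (χ v) = (p : ℂ) - 1 := by
  have h : ∀ v : ZMod p, χ v * (starRingEnd ℂ) (χ v) = if v = 0 then 0 else 1 := by
    intro v
    rw [conj_char', ← MulChar.mul_apply, mul_inv_cancel]
    rcases eq_or_ne v 0 with rfl | hv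
    · rw [if_pos rfl, MulChar.map_nonunit _ not_isUnit_zero]
    · rw [if_neg hv, MulChar.one_apply (isUnit_iff_ne_zero.mpr hv)]
  simp only [h]
  rw [← Finset.add_sum_erase _ _ (Finset.mem_univ (0 : ZMod p)), if_pos rfl, zero_add,
    Finset.sum_ite_of_false (by intro x hx; exact (Finset.mem_erase.mp hx).1),
    Finset.sum_const, Finset.card_erase_of_mem (Finset.mem_univ _)]
  have h1 : (1 : ℕ) ≤ Fintype.card (ZMod p) := Fintype.card_pos
  rw [nsmul_eq_mul, mul_one, Finset.card_univ, Nat.cast_sub h1, ZMod.card, Nat.cast_one]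

private lemma Jne' (χ : MulChar (ZMod p) ℂ) (hχ : χ ≠ 1) {w : ZMod p} (hw : w ≠ 0) :
    ∑ v : ZMod p, χ v * (starRingEnd ℂ) (χ (v + w)) = -1 := by
  have key : ∀ v : ZMod p, χ v * (starRingEnd ℂ) (χ (v + w)) = χ (v * (v + w)⁻¹) := by
    intro v
    rw [conj_char', MulChar.inv_apply, Ring.inverse_eq_inv, map_mul]
  simp only [key]
  have habs : ∀ x : ZMod p, x ≠ 1 → w * x * (1 - x)⁻¹ = -w → False := by
    intro x hx1 h
    have h1x : (1 : ZMod p) - x ≠ 0 := sub_ne_zero.mpr (Ne.symm hx1)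
    field_simp at h
    exact hw (by linear_combination w * h)
  have step1 : ∑ v ∈ Finset.univ \ {0, -w}, χ (v * (v + w)⁻¹)
      = ∑ v : ZMod p, χ (v * (v + w)⁻¹) := by
    refine Finset.sum_subset (Finset.subset_univ _) ?_
    intro v _ hv
    simp only [Finset.mem_sdiff, Finset.mem_univ, true_and, Finset.mem_insert,
      Finset.mem_singleton, not_not] at hv
    rcases hv with rfl | rfl
    · rw [zero_mul, MulChar.map_nonunit _ not_isUnit_zero]
    · rw [neg_add_cancel, inv_zero, mul_zero, MulChar.map_nonunit _ not_isUnit_zero]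
  have step2 : ∑ v ∈ Finset.univ \ {0, -w}, χ (v * (v + w)⁻¹)
      = ∑ x ∈ Finset.univ \ {0, 1}, χ x := by
    refine Finset.sum_bij' (fun v _ => v * (v + w)⁻¹) (fun x _ => w * x * (1 - x)⁻¹)
      ?_ ?_ ?_ ?_ ?_
    · intro v hv
      simp only [Finset.mem_sdiff, Finset.mem_univ, true_and, Finset.mem_insert,
        Finset.mem_singleton, not_or] at hv ⊢
      obtain ⟨hv0, hvw⟩ := hv
      have hvw' : v + w ≠ 0 := fun h => hvw (by linear_combination h)
      refine ⟨mul_ne_zero hv0 (inv_ne_zero hvw'), fun h => ?_⟩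
      rw [mul_inv_eq_one₀ hvw'] at h
      exact hw (left_eq_add.mp h)
    · intro x hx
      simp only [Finset.mem_sdiff, Finset.mem_univ, true_and, Finset.mem_insert,
        Finset.mem_singleton, not_or] at hx ⊢
      obtain ⟨hx0, hx1⟩ := hx
      have h1x : (1 : ZMod p) - x ≠ 0 := sub_ne_zero.mpr (Ne.symm hx1)
      exact ⟨mul_ne_zero (mul_ne_zero hw hx0) (inv_ne_zero h1x), habs x hx1⟩
    · intro v hv
      simp only [Finset.mem_sdiff, Finset.mem_univ, true_and, Finset.mem_insert,
        Finset.mem_singleton, not_or] at hv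
      obtain ⟨hv0, hvw⟩ := hv
      have hvw' : v + w ≠ 0 := fun h => hvw (by linear_combination h)
      have h1x : (1 : ZMod p) - v * (v + w)⁻¹ ≠ 0 := by
        rw [sub_ne_zero]
        intro h
        rw [eq_comm, mul_inv_eq_one₀ hvw'] at h
        exact hw (left_eq_add.mp h)
      field_simp
      rw [add_sub_cancel_left]
      exact div_self hw
    · intro x hx
      simp only [Finset.mem_sdiff, Finset.mem_univ, true_and, Finset.mem_insert,
        Finset.mem_singleton, not_or] at hx
      obtain ⟨hx0, hx1⟩ := hx
      have h1x : (1 : ZMod p) - x ≠ 0 := sub_ne_zero.mpr (Ne.symm hx1)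
      have hvw' : w * x * (1 - x)⁻¹ + w ≠ 0 := by
        intro h
        exact habs x hx1 (by linear_combination h)
      field_simp
      ring
    · intro v hv; rfl
  have step3 : ∑ x ∈ Finset.univ \ {0, 1}, χ x = -1 := by
    rw [Finset.sum_sdiff_eq_sub (by intro x _; exact Finset.mem_univ x),
      MulChar.sum_eq_zero_of_ne_one hχ,
      Finset.sum_pair (by exact fun h => one_ne_zero h.symm : (0 : ZMod p) ≠ 1)]
    rw [MulChar.map_nonunit _ not_isUnit_zero, MulChar.map_one]
    ring
  rw [← step1, step2, step3]

private lemma orth' (χ : MulChar (ZMod p) ℂ) (hχ : χ ≠ 1) (A : Finset (ZMod p))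
    (α : ZMod p → ℂ) :
    ∑ v : ZMod p, ‖∑ a ∈ A, α a * χ (a + v)‖ ^ 2
      ≤ (p : ℝ) * ∑ a ∈ A, ‖α a‖ ^ 2 := by
  set T : ZMod p → ℂ := fun v => ∑ a ∈ A, α a * χ (a + v) with hT
  have inner : ∀ a a' : ZMod p,
      ∑ v : ZMod p, χ (a + v) * (starRingEnd ℂ) (χ (a' + v))
        = if a' = a then (p : ℂ) - 1 else -1 := by
    intro a a'
    have he : ∑ v : ZMod p, χ (a + v) * (starRingEnd ℂ) (χ (a' + v))
        = ∑ u : ZMod p, χ u * (starRingEnd ℂ) (χ (u + (a' - a))) := by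
      refine Fintype.sum_equiv (Equiv.addLeft a) _ _ ?_
      intro v
      simp only [Equiv.coe_addLeft]
      congr 2
      ring
    rw [he]
    rcases eq_or_ne a' a with rfl | hne
    · rw [if_pos rfl]
      simpa using Jzero' χ
    · rw [if_neg hne]
      exact Jne' χ hχ (sub_ne_zero.mpr hne)
  have key : ∑ v : ZMod p, T v * (starRingEnd ℂ) (T v)
      = (p : ℂ) * (∑ a ∈ A, α a * (starRingEnd ℂ) (α a))
        - (∑ a ∈ A, α a) * (starRingEnd ℂ) (∑ a ∈ A, α a) := by
    have e1 : ∀ v : ZMod p, T v * (starRingEnd ℂ) (T v)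
        = ∑ a ∈ A, ∑ a' ∈ A, α a * (starRingEnd ℂ) (α a')
            * (χ (a + v) * (starRingEnd ℂ) (χ (a' + v))) := by
      intro v
      rw [hT]
      simp only [map_sum, Finset.sum_mul_sum, map_mul]
      refine Finset.sum_congr rfl fun a _ => Finset.sum_congr rfl fun a' _ => ?_
      ring
    have expand : ∑ v : ZMod p, T v * (starRingEnd ℂ) (T v)
        = ∑ a ∈ A, ∑ a' ∈ A, α a * (starRingEnd ℂ) (α a')
            * ∑ v : ZMod p, χ (a + v) * (starRingEnd ℂ) (χ (a' + v)) := by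
      simp only [e1]
      rw [Finset.sum_comm]
      refine Finset.sum_congr rfl fun a _ => ?_
      rw [Finset.sum_comm]
      refine Finset.sum_congr rfl fun a' _ => ?_
      rw [Finset.mul_sum]
    rw [expand]
    simp only [inner]
    have step : ∀ a ∈ A, ∑ a' ∈ A, α a * (starRingEnd ℂ) (α a')
          * (if a' = a then (p : ℂ) - 1 else -1)
        = (p : ℂ) * (α a * (starRingEnd ℂ) (α a))
          - α a * (starRingEnd ℂ) (∑ a' ∈ A, α a') := by
      intro a ha
      have : ∀ a' : ZMod p, α a * (starRingEnd ℂ) (α a')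
            * (if a' = a then (p : ℂ) - 1 else -1)
          = (if a' = a then (p : ℂ) * (α a * (starRingEnd ℂ) (α a')) else 0)
            - α a * (starRingEnd ℂ) (α a') := by
        intro a'
        split <;> ring
      simp only [this, Finset.sum_sub_distrib, Finset.sum_ite_eq' A a
        (fun a' => (p : ℂ) * (α a * (starRingEnd ℂ) (α a'))), if_pos ha, map_sum,
        Finset.mul_sum]
    rw [Finset.sum_congr rfl step, Finset.sum_sub_distrib, ← Finset.mul_sum,
      ← Finset.sum_mul, map_sum]
  have cast1 : ∀ z : ℂ, z * (starRingEnd ℂ) z = ((‖z‖ ^ 2 : ℝ) : ℂ) := by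
    intro z
    rw [Complex.mul_conj, Complex.sq_norm]
  have creal : ((∑ v : ZMod p, ‖T v‖ ^ 2 : ℝ) : ℂ)
      = ((p : ℝ) * (∑ a ∈ A, ‖α a‖ ^ 2)
          - ‖∑ a ∈ A, α a‖ ^ 2 : ℝ) := by
    rw [Complex.ofReal_sum]
    simp only [← cast1]
    rw [key, Complex.ofReal_sub, Complex.ofReal_mul, Complex.ofReal_sum,
      Complex.ofReal_natCast]
    simp only [← cast1]
  have rreal := Complex.ofReal_injective creal
  rw [rreal]
  have : (0 : ℝ) ≤ ‖∑ a ∈ A, α a‖ ^ 2 := sq_nonneg _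
  linarith

private lemma csC' {ι : Type*} (s : Finset ι) (f g : ι → ℂ) :
    ‖∑ x ∈ s, f x * g x‖
      ≤ Real.sqrt (∑ x ∈ s, ‖f x‖ ^ 2)
        * Real.sqrt (∑ x ∈ s, ‖g x‖ ^ 2) := by
  have h1 : ‖∑ x ∈ s, f x * g x‖
      ≤ ∑ x ∈ s, ‖f x‖ * ‖g x‖ := by
    refine (norm_sum_le _ _).trans ?_
    refine Finset.sum_le_sum fun x _ => ?_
    rw [norm_mul]
  refine h1.trans ?_
  have h2 := Finset.sum_mul_sq_le_sq_mul_sq s (fun x => ‖f x‖)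
    (fun x => ‖g x‖)
  have h3 : (0 : ℝ) ≤ ∑ x ∈ s, ‖f x‖ * ‖g x‖ :=
    Finset.sum_nonneg fun x _ => mul_nonneg (norm_nonneg _) (norm_nonneg _)
  calc ∑ x ∈ s, ‖f x‖ * ‖g x‖
      = Real.sqrt ((∑ x ∈ s, ‖f x‖ * ‖g x‖) ^ 2) :=
        (Real.sqrt_sq h3).symm
    _ ≤ Real.sqrt ((∑ x ∈ s, ‖f x‖ ^ 2) * ∑ x ∈ s, ‖g x‖ ^ 2) :=
        Real.sqrt_le_sqrt h2
    _ = _ := Real.sqrt_mul (Finset.sum_nonneg fun x _ => sq_nonneg _) _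

private lemma inj_sum_le' (G : ZMod p → ℝ) (hG : ∀ v, 0 ≤ G v)
    (s : Finset (ZMod p)) (f : ZMod p → ZMod p) (hf : Function.Injective f) :
    ∑ x ∈ s, G (f x) ≤ ∑ v : ZMod p, G v := by
  rw [← Finset.sum_image (fun a _ b _ h => hf h)]
  exact Finset.sum_le_sum_of_subset_of_nonneg (Finset.subset_univ _) fun v _ _ => hG v

private lemma final_num' (a b c d k m P : ℝ) (ha : 0 < a) (hm : 0 < m) (hb : 0 ≤ b)
    (hc : 0 ≤ c) (hd : 0 ≤ d) (hk : 0 ≤ k) (hP : 0 ≤ P) (hkm : k * m = b * c * d) :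
    Real.sqrt (b * c * d) * Real.sqrt (k * (P * a)) ≤ a * b * c * d * Real.sqrt (P / (a * m)) := by
  rw [← Real.sqrt_mul (by positivity)]
  have h2 : a * b * c * d * Real.sqrt (P / (a * m))
      = Real.sqrt ((a * b * c * d) ^ 2 * (P / (a * m))) := by
    rw [Real.sqrt_mul (by positivity), Real.sqrt_sq (by positivity)]
  rw [h2]
  apply Real.sqrt_le_sqrt
  have ha' : a ≠ 0 := ne_of_gt ha
  have hm' : m ≠ 0 := ne_of_gt hm
  rw [div_eq_mul_inv]
  have : b * c * d * (k * (P * a)) = (a * b * c * d) ^ 2 * (P * (a * m)⁻¹) := by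
    field_simp
    linear_combination (b * c * d * P) * hkm
  exact le_of_eq this

end Aux

theorem stmt12 {p : ℕ} [Fact p.Prime] (χ : MulChar (ZMod p) ℂ) (hχ : χ ≠ 1)
    (A B C D : Finset (ZMod p)) (hA : (0 : ZMod p) ∉ A) (hB : (0 : ZMod p) ∉ B)
    (hC : (0 : ZMod p) ∉ C) (hD : (0 : ZMod p) ∉ D)
    (α : ZMod p → ℂ) (β : ZMod p → ZMod p → ZMod p → ℂ)
    (hα : ∀ a ∈ A, ‖α a‖ ≤ 1)
    (hβ : ∀ b ∈ B, ∀ c ∈ C, ∀ d ∈ D, ‖β b c d‖ ≤ 1) :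
    ‖∑ a ∈ A, ∑ b ∈ B, ∑ c ∈ C, ∑ d ∈ D,
        α a * β b c d * χ (a + b + c * d)‖ ≤
      (A.card : ℝ) * B.card * C.card * D.card *
        Real.sqrt ((p : ℝ) /
          ((A.card : ℝ) * (max (max B.card C.card) D.card : ℕ))) := by
  classical
  by_cases hdeg : A = ∅ ∨ B = ∅ ∨ C = ∅ ∨ D = ∅
  · have hz : (∑ a ∈ A, ∑ b ∈ B, ∑ c ∈ C, ∑ d ∈ D,
        α a * β b c d * χ (a + b + c * d)) = 0 := by
      rcases hdeg with rfl | rfl | rfl | rfl <;> simp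
    rw [hz, norm_zero]
    positivity
  push_neg at hdeg
  obtain ⟨hAne, hBne, hCne, hDne⟩ := hdeg
  have hA1 : 0 < A.card := Finset.card_pos.mpr hAne
  have hB1 : 0 < B.card := Finset.card_pos.mpr hBne
  have hC1 : 0 < C.card := Finset.card_pos.mpr hCne
  have hD1 : 0 < D.card := Finset.card_pos.mpr hDne
  set T : ZMod p → ℂ := fun v => ∑ a ∈ A, α a * χ (a + v) with hT
  have hGnn : ∀ v : ZMod p, 0 ≤ ‖T v‖ ^ 2 := fun v => sq_nonneg _
  have hre : (∑ a ∈ A, ∑ b ∈ B, ∑ c ∈ C, ∑ d ∈ D, α a * β b c d * χ (a + b + c * d))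
      = ∑ b ∈ B, ∑ c ∈ C, ∑ d ∈ D, β b c d * T (b + c * d) := by
    rw [Finset.sum_comm]
    refine Finset.sum_congr rfl fun b _ => ?_
    rw [Finset.sum_comm]
    refine Finset.sum_congr rfl fun c _ => ?_
    rw [Finset.sum_comm]
    refine Finset.sum_congr rfl fun d _ => ?_
    rw [hT]
    rw [Finset.mul_sum]
    refine Finset.sum_congr rfl fun a _ => ?_
    rw [show a + (b + c * d) = a + b + c * d by ring]
    ring
  have hprod : (∑ b ∈ B, ∑ c ∈ C, ∑ d ∈ D, β b c d * T (b + c * d))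
      = ∑ x ∈ B ×ˢ C ×ˢ D, β x.1 x.2.1 x.2.2 * T (x.1 + x.2.1 * x.2.2) := by
    rw [Finset.sum_product]
    refine Finset.sum_congr rfl fun b _ => ?_
    rw [Finset.sum_product]
  rw [hre, hprod]
  have hcs := csC' (B ×ˢ C ×ˢ D) (fun x => β x.1 x.2.1 x.2.2)
    (fun x => T (x.1 + x.2.1 * x.2.2))
  refine hcs.trans ?_
  have hβ2 : ∑ x ∈ B ×ˢ C ×ˢ D, ‖β x.1 x.2.1 x.2.2‖ ^ 2
      ≤ (B.card : ℝ) * C.card * D.card := by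
    calc ∑ x ∈ B ×ˢ C ×ˢ D, ‖β x.1 x.2.1 x.2.2‖ ^ 2
        ≤ ∑ _x ∈ B ×ˢ C ×ˢ D, (1 : ℝ) := by
          refine Finset.sum_le_sum fun x hx => ?_
          simp only [Finset.mem_product] at hx
          have h1 := hβ x.1 hx.1 x.2.1 hx.2.1 x.2.2 hx.2.2
          calc ‖β x.1 x.2.1 x.2.2‖ ^ 2 ≤ 1 ^ 2 :=
                pow_le_pow_left₀ (norm_nonneg _) h1 2
            _ = 1 := one_pow 2
      _ = (B.card : ℝ) * C.card * D.card := by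
          rw [Finset.sum_const, Finset.card_product, Finset.card_product]
          push_cast
          ring
  have hSG : ∑ v : ZMod p, ‖T v‖ ^ 2 ≤ (p : ℝ) * A.card := by
    refine (orth' χ hχ A α).trans ?_
    have h1 : ∑ a ∈ A, ‖α a‖ ^ 2 ≤ (A.card : ℝ) := by
      calc ∑ a ∈ A, ‖α a‖ ^ 2 ≤ ∑ _a ∈ A, (1 : ℝ) :=
            Finset.sum_le_sum fun a ha => by
              calc ‖α a‖ ^ 2 ≤ 1 ^ 2 :=
                    pow_le_pow_left₀ (norm_nonneg _) (hα a ha) 2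
                _ = 1 := one_pow 2
        _ = A.card := by rw [Finset.sum_const, nsmul_eq_mul, mul_one]
    have hp : (0 : ℝ) ≤ p := Nat.cast_nonneg p
    exact mul_le_mul_of_nonneg_left h1 hp
  have htrip : ∑ x ∈ B ×ˢ C ×ˢ D, ‖T (x.1 + x.2.1 * x.2.2)‖ ^ 2
      = ∑ b ∈ B, ∑ c ∈ C, ∑ d ∈ D, ‖T (b + c * d)‖ ^ 2 := by
    rw [Finset.sum_product]
    refine Finset.sum_congr rfl fun b _ => ?_
    rw [Finset.sum_product]
  obtain ⟨K, hKM, hKbound⟩ :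
      ∃ K : ℕ, K * (max (max B.card C.card) D.card) = B.card * C.card * D.card ∧
        (∑ b ∈ B, ∑ c ∈ C, ∑ d ∈ D, ‖T (b + c * d)‖ ^ 2)
          ≤ (K : ℝ) * ∑ v : ZMod p, ‖T v‖ ^ 2 := by
    have hSnn : (0 : ℝ) ≤ ∑ v : ZMod p, ‖T v‖ ^ 2 :=
      Finset.sum_nonneg fun v _ => hGnn v
    rcases max_cases (max B.card C.card) D.card with ⟨hM, _⟩ | ⟨hM, _⟩
    · rcases max_cases B.card C.card with ⟨hM2, _⟩ | ⟨hM2, _⟩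
      · -- M = B.card
        refine ⟨C.card * D.card, by rw [hM, hM2]; ring, ?_⟩
        calc ∑ b ∈ B, ∑ c ∈ C, ∑ d ∈ D, ‖T (b + c * d)‖ ^ 2
            = ∑ c ∈ C, ∑ d ∈ D, ∑ b ∈ B, ‖T (b + c * d)‖ ^ 2 := by
              rw [Finset.sum_comm]
              exact Finset.sum_congr rfl fun c _ => Finset.sum_comm
          _ ≤ ∑ _c ∈ C, ∑ _d ∈ D, ∑ v : ZMod p, ‖T v‖ ^ 2 :=
              Finset.sum_le_sum fun c _ => Finset.sum_le_sum fun d _ =>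
                inj_sum_le' _ hGnn B (fun b => b + c * d) (add_left_injective (c * d))
          _ = ((C.card * D.card : ℕ) : ℝ) * ∑ v : ZMod p, ‖T v‖ ^ 2 := by
              rw [Finset.sum_const, Finset.sum_const]
              push_cast
              rw [smul_smul, nsmul_eq_mul]
              push_cast
              ring
      · -- M = C.card
        refine ⟨B.card * D.card, by rw [hM, hM2]; ring, ?_⟩
        calc ∑ b ∈ B, ∑ c ∈ C, ∑ d ∈ D, ‖T (b + c * d)‖ ^ 2
            = ∑ b ∈ B, ∑ d ∈ D, ∑ c ∈ C, ‖T (b + c * d)‖ ^ 2 :=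
              Finset.sum_congr rfl fun b _ => Finset.sum_comm
          _ ≤ ∑ _b ∈ B, ∑ d ∈ D, ∑ v : ZMod p, ‖T v‖ ^ 2 := by
              refine Finset.sum_le_sum fun b _ => Finset.sum_le_sum fun d hd => ?_
              have hd0 : d ≠ 0 := fun h => hD (h ▸ hd)
              refine inj_sum_le' _ hGnn C (fun c => b + c * d) ?_
              intro c1 c2 h
              exact mul_right_cancel₀ hd0 (add_left_cancel h)
          _ = ((B.card * D.card : ℕ) : ℝ) * ∑ v : ZMod p, ‖T v‖ ^ 2 := by
              rw [Finset.sum_const, Finset.sum_const]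
              push_cast
              rw [smul_smul, nsmul_eq_mul]
              push_cast
              ring
    · -- M = D.card
      refine ⟨B.card * C.card, by rw [hM], ?_⟩
      calc ∑ b ∈ B, ∑ c ∈ C, ∑ d ∈ D, ‖T (b + c * d)‖ ^ 2
          ≤ ∑ _b ∈ B, ∑ c ∈ C, ∑ v : ZMod p, ‖T v‖ ^ 2 := by
            refine Finset.sum_le_sum fun b _ => Finset.sum_le_sum fun c hc => ?_
            have hc0 : c ≠ 0 := fun h => hC (h ▸ hc)
            refine inj_sum_le' _ hGnn D (fun d => b + c * d) ?_
            intro d1 d2 h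
            exact mul_left_cancel₀ hc0 (add_left_cancel h)
        _ = ((B.card * C.card : ℕ) : ℝ) * ∑ v : ZMod p, ‖T v‖ ^ 2 := by
            rw [Finset.sum_const, Finset.sum_const]
            push_cast
            rw [smul_smul, nsmul_eq_mul]
            push_cast
            ring
  have hK0 : (0 : ℝ) ≤ (K : ℝ) := Nat.cast_nonneg K
  have hTsum : ∑ x ∈ B ×ˢ C ×ˢ D, ‖T (x.1 + x.2.1 * x.2.2)‖ ^ 2
      ≤ (K : ℝ) * ((p : ℝ) * A.card) := by
    rw [htrip]
    exact hKbound.trans (mul_le_mul_of_nonneg_left hSG hK0)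
  have hstep := mul_le_mul (Real.sqrt_le_sqrt hβ2) (Real.sqrt_le_sqrt hTsum)
    (Real.sqrt_nonneg _) (Real.sqrt_nonneg _)
  refine hstep.trans ?_
  have hm1 : 0 < ((max (max B.card C.card) D.card : ℕ) : ℝ) := by
    have : 0 < max (max B.card C.card) D.card :=
      lt_of_lt_of_le hB1 ((le_max_left _ _).trans (le_max_left _ _))
    exact_mod_cast this
  have hkm : (K : ℝ) * ((max (max B.card C.card) D.card : ℕ) : ℝ)
      = (B.card : ℝ) * C.card * D.card := by
    exact_mod_cast congrArg (fun n : ℕ => (n : ℝ)) hKM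
  exact final_num' A.card B.card C.card D.card K _ p
    (by exact_mod_cast hA1) hm1 (Nat.cast_nonneg _) (Nat.cast_nonneg _)
    (Nat.cast_nonneg _) hK0 (Nat.cast_nonneg _) hkm
end

section
/- Let p be prime, A, B, C, D ⊆ F_p^* of cardinalities A, B, C, D with BCD ≤ p² and M = max{B,C,D}, and weights |α_a| ≤ 1, |β_{b,c,d}| ≤ 1. Then V = ∑_{a,b,c,d} α_a β_{b,c,d} e_p(ab(c+d)) satisfies |V| = O( p^{1/2} ((BCD)^{3/4} + (BCD·M)^{1/2}) A^{1/2} ), assuming J(B,C,D) = O((BCD)^{3/2} + BCD·M). -/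
open Finset

private lemma my_sqrt_add_le (x y : ℝ) (hx : 0 ≤ x) (hy : 0 ≤ y) :
    Real.sqrt (x + y) ≤ Real.sqrt x + Real.sqrt y := by
  have h1 := Real.sq_sqrt hx
  have h2 := Real.sq_sqrt hy
  have h3 := Real.sqrt_nonneg x
  have h4 := Real.sqrt_nonneg y
  have h : x + y ≤ (Real.sqrt x + Real.sqrt y) ^ 2 := by nlinarith [mul_nonneg h3 h4]
  calc Real.sqrt (x + y) ≤ Real.sqrt ((Real.sqrt x + Real.sqrt y) ^ 2) := Real.sqrt_le_sqrt h
    _ = Real.sqrt x + Real.sqrt y := Real.sqrt_sq (by positivity)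

private lemma chi_eq {p : ℕ} [NeZero p] (x : ZMod p) :
    Complex.exp (2 * Real.pi * Complex.I * ((x.val : ℂ)) / p) = ZMod.stdAddChar x := by
  have h := ZMod.stdAddChar_coe (N := p) (x.val : ℤ)
  rw [show (((x.val : ℤ)) : ZMod p) = x by push_cast; exact ZMod.natCast_rightInverse x] at h
  rw [h]; push_cast; ring_nf

private lemma chi_conj {p : ℕ} [NeZero p] (x : ZMod p) :
    (starRingEnd ℂ) (ZMod.stdAddChar x) = ZMod.stdAddChar (-x) := by
  rw [AddChar.map_neg_eq_inv, ZMod.stdAddChar_apply,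
    ← Circle.coe_inv, Circle.coe_inv_eq_conj]

set_option maxHeartbeats 2000000 in
theorem stmt17 :
    ∃ c : ℝ, 0 < c ∧
      ∀ (p : ℕ) (_ : p.Prime) (A B C D : Finset (ZMod p)),
        (0 : ZMod p) ∉ A → (0 : ZMod p) ∉ B → (0 : ZMod p) ∉ C → (0 : ZMod p) ∉ D →
        B.card * C.card * D.card ≤ p ^ 2 →
        ∀ (α : ZMod p → ℂ) (β : ZMod p → ZMod p → ZMod p → ℂ),
          (∀ a ∈ A, ‖α a‖ ≤ 1) →
          (∀ b ∈ B, ∀ cc ∈ C, ∀ d ∈ D, ‖β b cc d‖ ≤ 1) →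
          ∀ c₁ : ℝ, 0 ≤ c₁ →
          ((((B ×ˢ C ×ˢ D) ×ˢ (B ×ˢ C ×ˢ D)).filter
              (fun t => t.1.1 * (t.1.2.1 + t.1.2.2) = t.2.1 * (t.2.2.1 + t.2.2.2))).card : ℝ) ≤
            c₁ * (((B.card * C.card * D.card : ℝ)) ^ ((3 : ℝ) / 2) +
              (B.card * C.card * D.card : ℝ) * (max (max B.card C.card) D.card : ℕ)) →
          ‖∑ a ∈ A, ∑ b ∈ B, ∑ cc ∈ C, ∑ d ∈ D,
              α a * β b cc d *
                Complex.exp (2 * Real.pi * Complex.I *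
                  (((a * b * (cc + d)).val : ℂ)) / p)‖ ≤
            c * Real.sqrt c₁ * (p : ℝ) ^ ((1 : ℝ) / 2) *
              (((B.card * C.card * D.card : ℝ)) ^ ((3 : ℝ) / 4) +
                ((B.card * C.card * D.card : ℝ) *
                  (max (max B.card C.card) D.card : ℕ)) ^ ((1 : ℝ) / 2)) *
              (A.card : ℝ) ^ ((1 : ℝ) / 2) := by
  refine ⟨1, one_pos, ?_⟩
  intro p hp A B C D hA0 hB0 hC0 hD0 hBCD α β hα hβ c₁ hc₁ hJ
  haveI : NeZero p := ⟨hp.pos.ne'⟩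
  classical
  set χ : AddChar (ZMod p) ℂ := ZMod.stdAddChar with hχdef
  set T : Finset (ZMod p × ZMod p × ZMod p) := B ×ˢ C ×ˢ D with hT
  set g : ZMod p × ZMod p × ZMod p → ZMod p := fun t => t.1 * (t.2.1 + t.2.2) with hg
  set βf : ZMod p × ZMod p × ZMod p → ℂ := fun t => β t.1 t.2.1 t.2.2 with hβf
  set f : ZMod p → ℂ := fun a => ∑ t ∈ T, βf t * χ (a * g t) with hf
  have hβf1 : ∀ t ∈ T, ‖βf t‖ ≤ 1 := by
    intro t ht
    rw [hT, Finset.mem_product] at ht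
    rw [Finset.mem_product] at ht
    exact hβ t.1 ht.1 t.2.1 ht.2.1 t.2.2 ht.2.2
  -- Step A : rewrite the quadruple sum
  have hV : (∑ a ∈ A, ∑ b ∈ B, ∑ cc ∈ C, ∑ d ∈ D,
      α a * β b cc d * Complex.exp (2 * Real.pi * Complex.I *
        (((a * b * (cc + d)).val : ℂ)) / p)) = ∑ a ∈ A, α a * f a := by
    refine Finset.sum_congr rfl fun a _ => ?_
    rw [hf]
    simp only [hT, Finset.sum_product, Finset.mul_sum]
    refine Finset.sum_congr rfl fun b _ => Finset.sum_congr rfl fun cc _ =>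
      Finset.sum_congr rfl fun d _ => ?_
    rw [chi_eq, show a * b * (cc + d) = a * (b * (cc + d)) from mul_assoc _ _ _]
    simp only [hβf, hg, hχdef]
    ring
  -- Step E : Parseval
  have horth : ∀ u : ZMod p, (∑ a : ZMod p, χ (a * u)) = if u = 0 then (p : ℂ) else 0 := by
    intro u
    have := AddChar.sum_mulShift (ψ := ZMod.stdAddChar (N := p)) u (ZMod.isPrimitive_stdAddChar p)
    rw [ZMod.card] at this
    simpa [hχdef] using this
  have hexpand : ∀ a : ZMod p, f a * (starRingEnd ℂ) (f a)
      = ∑ t₁ ∈ T, ∑ t₂ ∈ T, βf t₁ * (starRingEnd ℂ) (βf t₂) * χ (a * (g t₁ - g t₂)) := by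
    intro a
    rw [hf]
    simp only [map_sum, map_mul, Finset.sum_mul_sum]
    refine Finset.sum_congr rfl fun t₁ _ => Finset.sum_congr rfl fun t₂ _ => ?_
    rw [chi_conj, ← hχdef]
    have hkey : χ (a * (g t₁ - g t₂)) = χ (a * g t₁) * χ (-(a * g t₂)) := by
      rw [← AddChar.map_add_eq_mul]
      congr 1
      ring
    rw [hkey]
    ring
  have hEcomplex : (∑ a : ZMod p, f a * (starRingEnd ℂ) (f a))
      = ∑ t₁ ∈ T, ∑ t₂ ∈ T, βf t₁ * (starRingEnd ℂ) (βf t₂) *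
          (if g t₁ = g t₂ then (p : ℂ) else 0) := by
    rw [Finset.sum_congr rfl fun a _ => hexpand a]
    rw [Finset.sum_comm]
    refine Finset.sum_congr rfl fun t₁ _ => ?_
    rw [Finset.sum_comm]
    refine Finset.sum_congr rfl fun t₂ _ => ?_
    rw [← Finset.mul_sum, horth]
    simp only [sub_eq_zero]
  have hreal : ((∑ a : ZMod p, (‖f a‖)^2 : ℝ) : ℂ)
      = ∑ a : ZMod p, f a * (starRingEnd ℂ) (f a) := by
    push_cast
    refine Finset.sum_congr rfl fun a _ => ?_
    rw [Complex.mul_conj]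
    exact_mod_cast congrArg Complex.ofReal (Complex.sq_norm (f a))
  set Jc : ℕ := (((B ×ˢ C ×ˢ D) ×ˢ (B ×ˢ C ×ˢ D)).filter
      (fun t => t.1.1 * (t.1.2.1 + t.1.2.2) = t.2.1 * (t.2.2.1 + t.2.2.2))).card with hJc
  have hE : (∑ a : ZMod p, (‖f a‖)^2 : ℝ) ≤ (p : ℝ) * Jc := by
    have habs : (∑ a : ZMod p, (‖f a‖)^2 : ℝ)
        = ‖((∑ a : ZMod p, (‖f a‖)^2 : ℝ) : ℂ)‖ := by
      rw [Complex.norm_real, Real.norm_eq_abs, abs_of_nonneg (by positivity)]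
    rw [habs, hreal, hEcomplex]
    calc ‖∑ t₁ ∈ T, ∑ t₂ ∈ T, βf t₁ * (starRingEnd ℂ) (βf t₂) *
            (if g t₁ = g t₂ then (p : ℂ) else 0)‖
        ≤ ∑ t₁ ∈ T, ∑ t₂ ∈ T, ‖βf t₁ * (starRingEnd ℂ) (βf t₂) *
            (if g t₁ = g t₂ then (p : ℂ) else 0)‖ := by
          refine (norm_sum_le _ _).trans (Finset.sum_le_sum fun t₁ _ => ?_)
          exact norm_sum_le _ _
      _ ≤ ∑ t₁ ∈ T, ∑ t₂ ∈ T, (if g t₁ = g t₂ then (p : ℝ) else 0) := by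
          refine Finset.sum_le_sum fun t₁ ht₁ => Finset.sum_le_sum fun t₂ ht₂ => ?_
          rw [norm_mul, norm_mul, Complex.norm_conj]
          split_ifs with h
          · simp only [Complex.norm_natCast]
            have h1 := hβf1 t₁ ht₁
            have h2 := hβf1 t₂ ht₂
            have n1 := norm_nonneg (βf t₁)
            have n2 := norm_nonneg (βf t₂)
            have hp0 : (0:ℝ) ≤ (p:ℝ) := by positivity
            have hb : ‖βf t₁‖ * ‖βf t₂‖ ≤ 1 := by nlinarith
            have := mul_le_mul_of_nonneg_right hb hp0
            linarith
          · simp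
      _ = (p : ℝ) * Jc := by
          rw [← Finset.sum_product']
          rw [show (∑ x ∈ T ×ˢ T, if g x.1 = g x.2 then (p:ℝ) else 0)
              = ∑ x ∈ (T ×ˢ T).filter (fun x => g x.1 = g x.2), (p:ℝ) from
            (Finset.sum_filter _ _).symm]
          rw [Finset.sum_const, nsmul_eq_mul, hJc, hT, hg, mul_comm]
  -- Cauchy-Schwarz chain
  rw [hV]
  set X : ℝ := ((B.card * C.card * D.card : ℝ)) ^ ((3 : ℝ) / 2) +
      (B.card * C.card * D.card : ℝ) * (max (max B.card C.card) D.card : ℕ) with hX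
  have hBCDnn : (0:ℝ) ≤ (B.card * C.card * D.card : ℝ) := by positivity
  have hXnn : 0 ≤ X := by
    rw [hX]; positivity
  have h1 : ‖∑ a ∈ A, α a * f a‖ ≤ ∑ a ∈ A, ‖f a‖ := by
    refine (norm_sum_le _ _).trans (Finset.sum_le_sum fun a ha => ?_)
    rw [norm_mul]
    exact mul_le_of_le_one_left (norm_nonneg _) (hα a ha)
  have h2 : (∑ a ∈ A, ‖f a‖) ^ 2
      ≤ (A.card : ℝ) * ∑ a ∈ A, (‖f a‖) ^ 2 := sq_sum_le_card_mul_sum_sq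
  have h3 : (∑ a ∈ A, (‖f a‖) ^ 2) ≤ ∑ a : ZMod p, (‖f a‖) ^ 2 :=
    Finset.sum_le_sum_of_subset_of_nonneg (Finset.subset_univ A) (fun a _ _ => by positivity)
  have h5 : (∑ a : ZMod p, (‖f a‖)^2 : ℝ) ≤ (p : ℝ) * (c₁ * X) := by
    refine hE.trans ?_
    have : (Jc : ℝ) ≤ c₁ * X := hJ
    nlinarith [Nat.cast_nonneg (α := ℝ) p]
  have key : (∑ a ∈ A, ‖f a‖) ^ 2 ≤ (A.card : ℝ) * ((p:ℝ) * (c₁ * X)) := by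
    calc (∑ a ∈ A, ‖f a‖) ^ 2 ≤ (A.card : ℝ) * ∑ a ∈ A, (‖f a‖) ^ 2 := h2
      _ ≤ (A.card : ℝ) * ((p:ℝ) * (c₁ * X)) := by
          have := h3.trans h5
          nlinarith [Nat.cast_nonneg (α := ℝ) A.card]
  have hsum_nn : 0 ≤ ∑ a ∈ A, ‖f a‖ :=
    Finset.sum_nonneg fun a _ => norm_nonneg _
  have h6 : (∑ a ∈ A, ‖f a‖)
      ≤ Real.sqrt ((A.card : ℝ) * ((p:ℝ) * (c₁ * X))) := by
    rw [show (∑ a ∈ A, ‖f a‖) = Real.sqrt ((∑ a ∈ A, ‖f a‖)^2) from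
      (Real.sqrt_sq hsum_nn).symm]
    exact Real.sqrt_le_sqrt key
  refine (h1.trans h6).trans ?_
  -- final arithmetic
  clear_value X
  clear * - hc₁ hBCDnn hXnn hX
  have hsplit : Real.sqrt ((A.card : ℝ) * ((p:ℝ) * (c₁ * X)))
      = Real.sqrt (A.card : ℝ) * (Real.sqrt (p:ℝ) * (Real.sqrt c₁ * Real.sqrt X)) := by
    rw [Real.sqrt_mul (by positivity), Real.sqrt_mul (by positivity), Real.sqrt_mul hc₁]
  rw [hsplit]
  have hsqX : Real.sqrt X ≤ ((B.card * C.card * D.card : ℝ)) ^ ((3 : ℝ) / 4) +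
      ((B.card * C.card * D.card : ℝ) * (max (max B.card C.card) D.card : ℕ)) ^ ((1 : ℝ) / 2) := by
    rw [hX]
    refine (my_sqrt_add_le _ _ (by positivity) (by positivity)).trans ?_
    have e1 : Real.sqrt (((B.card * C.card * D.card : ℝ)) ^ ((3 : ℝ) / 2))
        = ((B.card * C.card * D.card : ℝ)) ^ ((3 : ℝ) / 4) := by
      rw [Real.sqrt_eq_rpow]
      rw [← Real.rpow_mul hBCDnn]
      norm_num
    have e2 : Real.sqrt ((B.card * C.card * D.card : ℝ) * (max (max B.card C.card) D.card : ℕ))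
        = ((B.card * C.card * D.card : ℝ) * (max (max B.card C.card) D.card : ℕ)) ^ ((1 : ℝ) / 2) := by
      rw [Real.sqrt_eq_rpow]
    rw [e1, e2]
  have hp12 : Real.sqrt (p : ℝ) = (p : ℝ) ^ ((1:ℝ)/2) := Real.sqrt_eq_rpow _
  have hA12 : Real.sqrt (A.card : ℝ) = (A.card : ℝ) ^ ((1:ℝ)/2) := Real.sqrt_eq_rpow _
  rw [one_mul]
  calc Real.sqrt (A.card : ℝ) * (Real.sqrt (p:ℝ) * (Real.sqrt c₁ * Real.sqrt X))
      ≤ Real.sqrt (A.card : ℝ) * (Real.sqrt (p:ℝ) * (Real.sqrt c₁ *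
          (((B.card * C.card * D.card : ℝ)) ^ ((3 : ℝ) / 4) +
          ((B.card * C.card * D.card : ℝ) * (max (max B.card C.card) D.card : ℕ)) ^ ((1 : ℝ) / 2)))) := by
        have := Real.sqrt_nonneg (A.card : ℝ)
        have := Real.sqrt_nonneg (p : ℝ)
        have := Real.sqrt_nonneg c₁
        gcongr
    _ = Real.sqrt c₁ * (p : ℝ) ^ ((1:ℝ)/2) *
          (((B.card * C.card * D.card : ℝ)) ^ ((3 : ℝ) / 4) +
          ((B.card * C.card * D.card : ℝ) * (max (max B.card C.card) D.card : ℕ)) ^ ((1 : ℝ) / 2)) *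
          (A.card : ℝ) ^ ((1:ℝ)/2) := by
        rw [← hp12, ← hA12]; ring
end
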